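/- For every t ≥ 1 and n = 2^t, RBW_n is a finite-index subgroup of BW_n and the quotient group BW_n / RBW_n has order 2^{n/2}. -/

import Mathlib

open Matrix

noncomputable section

/-- `Rmat n` is the `n × n` matrix `I_{n/2} ⊗ R(2)`, block diagonal with
`2 × 2` blocks `[[1, 1], [1, -1]]`, acting on row vectors on the right. -/
def Rmat (n : ℕ) : Matrix (Fin n) (Fin n) ℝ :=
  Matrix.of fun i j =>
    if (i : ℕ) / 2 = (j : ℕ) / 2 then
      if (i : ℕ) % 2 = 1 ∧ (j : ℕ) % 2 = 1 then -1 else 1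
    else 0

/-- Concatenation `(u, v)` of two `2^t`-dimensional vectors into a
`2^(t+1)`-dimensional vector. -/
def concat {t : ℕ} (u v : Fin (2 ^ t) → ℝ) : Fin (2 ^ (t + 1)) → ℝ := fun i =>
  if h : (i : ℕ) < 2 ^ t then u ⟨i, h⟩
  else v ⟨(i : ℕ) - 2 ^ t, by
    have hi := i.isLt
    have h2 : 2 ^ (t + 1) = 2 ^ t + 2 ^ t := by rw [pow_succ]; ring
    omega⟩

/-- The Barnes–Wall lattices `BW_{2^t} ⊆ ℝ^{2^t}`, defined recursively by
`BW_2 = ℤ²` and `BW_{2n} = {(u, u + v) : u ∈ BW_n, v ∈ BW_n · R(n)}`. -/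
def BW : ∀ t : ℕ, Set (Fin (2 ^ t) → ℝ)
  | 0 => {x | ∀ i, ∃ z : ℤ, x i = (z : ℝ)}
  | (t + 1) =>
    {x | ∃ u v : Fin (2 ^ t) → ℝ, u ∈ BW t ∧
      (∃ w ∈ BW t, v = Matrix.vecMul w (Rmat (2 ^ t))) ∧ x = concat u (u + v)}

/-- `RBW_n = {x · R(n) : x ∈ BW_n}`. -/
def RBW (t : ℕ) : Set (Fin (2 ^ t) → ℝ) :=
  (fun x => Matrix.vecMul x (Rmat (2 ^ t))) '' BW t

/-- Squared Euclidean norm. -/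
def sqnorm {m : ℕ} (x : Fin m → ℝ) : ℝ := ∑ i, x i ^ 2

/-- `minDist Λ` is the minimum of `‖x‖²` over nonzero `x ∈ Λ`. -/
def minDist {m : ℕ} (Λ : Set (Fin m → ℝ)) : ℝ :=
  sInf (sqnorm '' {x ∈ Λ | x ≠ 0})

lemma Rmat_apply {n : ℕ} (i j : Fin n) :
    Rmat n i j =
      if (i : ℕ) / 2 = (j : ℕ) / 2 then
        if (i : ℕ) % 2 = 1 ∧ (j : ℕ) % 2 = 1 then -1 else 1
      else 0 := rfl

lemma vecMul_Rmat_apply {n : ℕ} (x : Fin n → ℝ) {m : ℕ} (hm : 2 * m + 1 < n) (j : Fin n)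
    (hj : (j : ℕ) / 2 = m) :
    Matrix.vecMul x (Rmat n) j =
      x ⟨2 * m, by omega⟩ + (if (j : ℕ) % 2 = 1 then -1 else 1) * x ⟨2 * m + 1, hm⟩ := by
  classical
  set a : Fin n := ⟨2 * m, by omega⟩ with ha
  set b : Fin n := ⟨2 * m + 1, hm⟩ with hb
  have hab : a ≠ b := by
    intro h
    have := congrArg Fin.val h
    simp [ha, hb] at this
  have key : ∀ i ∈ Finset.univ,
      i ∉ ({a, b} : Finset (Fin n)) → x i * Rmat n i j = 0 := by
    intro i _ hi
    simp only [Finset.mem_insert, Finset.mem_singleton] at hi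
    have h1 : (i : ℕ) ≠ 2 * m := fun h => hi (Or.inl (Fin.ext h))
    have h2 : (i : ℕ) ≠ 2 * m + 1 := fun h => hi (Or.inr (Fin.ext h))
    have hne : ¬ ((i : ℕ) / 2 = (j : ℕ) / 2) := by omega
    simp [Rmat_apply, hne]
  have expand : Matrix.vecMul x (Rmat n) j = ∑ i, x i * Rmat n i j := rfl
  rw [expand, ← Finset.sum_subset (Finset.subset_univ ({a, b} : Finset (Fin n))) key,
    Finset.sum_pair hab]
  have hva : (a : ℕ) = 2 * m := rfl
  have hvb : (b : ℕ) = 2 * m + 1 := rfl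
  have hRa : Rmat n a j = 1 := by
    have h1 : (a : ℕ) / 2 = (j : ℕ) / 2 := by omega
    have h2 : ¬ ((a : ℕ) % 2 = 1 ∧ (j : ℕ) % 2 = 1) := by omega
    simp [Rmat_apply, h1, h2]
  have hRb : Rmat n b j = if (j : ℕ) % 2 = 1 then -1 else 1 := by
    have h1 : (b : ℕ) / 2 = (j : ℕ) / 2 := by omega
    have h2 : (b : ℕ) % 2 = 1 := by omega
    by_cases hj2 : (j : ℕ) % 2 = 1
    · simp [Rmat_apply, h1, h2, hj2]
    · simp [Rmat_apply, h1, h2, hj2]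
  rw [hRa, hRb]
  ring

lemma vecMul_Rmat_even {n : ℕ} (x : Fin n → ℝ) {m : ℕ} (hm : 2 * m + 1 < n) :
    Matrix.vecMul x (Rmat n) ⟨2 * m, by omega⟩ =
      x ⟨2 * m, by omega⟩ + x ⟨2 * m + 1, hm⟩ := by
  rw [vecMul_Rmat_apply x hm _ (show 2 * m / 2 = m by omega)]
  have : (2 * m) % 2 ≠ 1 := by omega
  simp only [this, if_false]
  ring

lemma vecMul_Rmat_odd {n : ℕ} (x : Fin n → ℝ) {m : ℕ} (hm : 2 * m + 1 < n) :
    Matrix.vecMul x (Rmat n) ⟨2 * m + 1, hm⟩ =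
      x ⟨2 * m, by omega⟩ - x ⟨2 * m + 1, hm⟩ := by
  rw [vecMul_Rmat_apply x hm _ (show (2 * m + 1) / 2 = m by omega)]
  have : (2 * m + 1) % 2 = 1 := by omega
  simp only [this, if_true]
  ring

lemma vecMul_vecMul_Rmat {n : ℕ} (hn : n % 2 = 0) (x : Fin n → ℝ) :
    Matrix.vecMul (Matrix.vecMul x (Rmat n)) (Rmat n) = (2 : ℝ) • x := by
  funext j
  rcases Nat.even_or_odd (j : ℕ) with ⟨m, hm⟩ | ⟨m, hm⟩
  · have hmn : 2 * m + 1 < n := by have := j.isLt; omega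
    have hj : j = ⟨2 * m, by omega⟩ := Fin.ext (show (j : ℕ) = 2 * m by omega)
    rw [hj, vecMul_Rmat_even _ hmn, vecMul_Rmat_even x hmn, vecMul_Rmat_odd x hmn]
    simp only [Pi.smul_apply, smul_eq_mul]
    ring
  · have hmn : 2 * m + 1 < n := by have := j.isLt; omega
    have hj : j = ⟨2 * m + 1, hmn⟩ := Fin.ext (show (j : ℕ) = 2 * m + 1 by omega)
    rw [hj, vecMul_Rmat_odd _ hmn, vecMul_Rmat_even x hmn, vecMul_Rmat_odd x hmn]
    simp only [Pi.smul_apply, smul_eq_mul]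
    ring


lemma two_pow_succ' (t : ℕ) : 2 ^ (t + 1) = 2 ^ t + 2 ^ t := by rw [pow_succ]; ring

def half1 {t : ℕ} (x : Fin (2 ^ (t + 1)) → ℝ) : Fin (2 ^ t) → ℝ := fun i =>
  x ⟨i, by have := i.isLt; have h := two_pow_succ' t; omega⟩

def half2 {t : ℕ} (x : Fin (2 ^ (t + 1)) → ℝ) : Fin (2 ^ t) → ℝ := fun i =>
  x ⟨(i : ℕ) + 2 ^ t, by have := i.isLt; have h := two_pow_succ' t; omega⟩

lemma half1_concat {t : ℕ} (u v : Fin (2 ^ t) → ℝ) : half1 (concat u v) = u := by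
  funext i
  simp only [half1, concat]
  split
  · exact congrArg u (Fin.ext rfl)
  · exact absurd i.isLt (by assumption)

lemma half2_concat {t : ℕ} (u v : Fin (2 ^ t) → ℝ) : half2 (concat u v) = v := by
  funext i
  simp only [half2, concat]
  split
  · omega
  · exact congrArg v (Fin.ext (by simp))

lemma concat_halves {t : ℕ} (x : Fin (2 ^ (t + 1)) → ℝ) : concat (half1 x) (half2 x) = x := by
  funext j
  by_cases h : (j : ℕ) < 2 ^ t
  · simp only [concat, dif_pos h, half1]
  · simp only [concat, dif_neg h, half2]
    congr 1
    have hj := j.isLt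
    have h2 := two_pow_succ' t
    exact Fin.ext (by simp; omega)

lemma half1_vecMul {t : ℕ} (ht : 2 ^ t % 2 = 0) (y : Fin (2 ^ (t + 1)) → ℝ) :
    half1 (Matrix.vecMul y (Rmat (2 ^ (t + 1)))) = Matrix.vecMul (half1 y) (Rmat (2 ^ t)) := by
  funext i
  have h2 := two_pow_succ' t
  rcases Nat.even_or_odd (i : ℕ) with ⟨m, hm⟩ | ⟨m, hm⟩
  · have hmn : 2 * m + 1 < 2 ^ t := by have := i.isLt; omega
    have hmn' : 2 * m + 1 < 2 ^ (t + 1) := by omega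
    have hi : i = ⟨2 * m, by omega⟩ := Fin.ext (show (i : ℕ) = 2 * m by omega)
    rw [hi]
    show Matrix.vecMul y (Rmat (2 ^ (t + 1))) ⟨2 * m, by omega⟩ = _
    rw [vecMul_Rmat_even y hmn', vecMul_Rmat_even (half1 y) hmn]
    rfl
  · have hmn : 2 * m + 1 < 2 ^ t := by have := i.isLt; omega
    have hmn' : 2 * m + 1 < 2 ^ (t + 1) := by omega
    have hi : i = ⟨2 * m + 1, hmn⟩ := Fin.ext (show (i : ℕ) = 2 * m + 1 by omega)
    rw [hi]
    show Matrix.vecMul y (Rmat (2 ^ (t + 1))) ⟨2 * m + 1, hmn'⟩ = _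
    rw [vecMul_Rmat_odd y hmn', vecMul_Rmat_odd (half1 y) hmn]
    rfl

lemma half2_vecMul {t : ℕ} (ht : 2 ^ t % 2 = 0) (y : Fin (2 ^ (t + 1)) → ℝ) :
    half2 (Matrix.vecMul y (Rmat (2 ^ (t + 1)))) = Matrix.vecMul (half2 y) (Rmat (2 ^ t)) := by
  funext i
  have h2 := two_pow_succ' t
  rcases Nat.even_or_odd (i : ℕ) with ⟨m, hm⟩ | ⟨m, hm⟩
  · have hmn : 2 * m + 1 < 2 ^ t := by have := i.isLt; omega
    have hmn' : 2 * (m + 2 ^ t / 2) + 1 < 2 ^ (t + 1) := by omega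
    have hi : i = ⟨2 * m, by omega⟩ := Fin.ext (show (i : ℕ) = 2 * m by omega)
    rw [hi]
    show Matrix.vecMul y (Rmat (2 ^ (t + 1))) ⟨2 * m + 2 ^ t, by omega⟩ = _
    have hidx : (⟨2 * m + 2 ^ t, by omega⟩ : Fin (2 ^ (t + 1))) = ⟨2 * (m + 2 ^ t / 2), by omega⟩ :=
      Fin.ext (by simp; omega)
    rw [hidx, vecMul_Rmat_even y hmn', vecMul_Rmat_even (half2 y) hmn]
    show y _ + y _ = y _ + y _
    congr 2 <;> exact Fin.ext (by simp; omega)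
  · have hmn : 2 * m + 1 < 2 ^ t := by have := i.isLt; omega
    have hmn' : 2 * (m + 2 ^ t / 2) + 1 < 2 ^ (t + 1) := by omega
    have hi : i = ⟨2 * m + 1, hmn⟩ := Fin.ext (show (i : ℕ) = 2 * m + 1 by omega)
    rw [hi]
    show Matrix.vecMul y (Rmat (2 ^ (t + 1))) ⟨2 * m + 1 + 2 ^ t, by omega⟩ = _
    have hidx : (⟨2 * m + 1 + 2 ^ t, by omega⟩ : Fin (2 ^ (t + 1))) =
        ⟨2 * (m + 2 ^ t / 2) + 1, hmn'⟩ := Fin.ext (by simp; omega)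
    rw [hidx, vecMul_Rmat_odd y hmn', vecMul_Rmat_odd (half2 y) hmn]
    show y _ - y _ = y _ - y _
    congr 2 <;> exact Fin.ext (by simp; omega)


lemma half1_add {t : ℕ} (x y : Fin (2 ^ (t + 1)) → ℝ) :
    half1 (x + y) = half1 x + half1 y := rfl

lemma half2_add {t : ℕ} (x y : Fin (2 ^ (t + 1)) → ℝ) :
    half2 (x + y) = half2 x + half2 y := rfl

lemma smul_vecMul_cancel {t : ℕ} (ht : 2 ^ t % 2 = 0) (v : Fin (2 ^ t) → ℝ) :
    (2 : ℝ)⁻¹ • Matrix.vecMul (Matrix.vecMul v (Rmat (2 ^ t))) (Rmat (2 ^ t)) = v := by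
  rw [vecMul_vecMul_Rmat ht, smul_smul, inv_mul_cancel₀ two_ne_zero, one_smul]

/-- The additive equivalence `x ↦ (x₁, (x₂ - x₁) R / 2)` with inverse
`(u, w) ↦ (u, u + w R)`. -/
def Phi (t : ℕ) (ht : 2 ^ t % 2 = 0) :
    (Fin (2 ^ (t + 1)) → ℝ) ≃+ (Fin (2 ^ t) → ℝ) × (Fin (2 ^ t) → ℝ) where
  toFun x := (half1 x, (2 : ℝ)⁻¹ • Matrix.vecMul (half2 x - half1 x) (Rmat (2 ^ t)))
  invFun p := concat p.1 (p.1 + Matrix.vecMul p.2 (Rmat (2 ^ t)))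
  left_inv x := by
    simp only [Matrix.smul_vecMul, smul_vecMul_cancel ht]
    have : half1 x + (half2 x - half1 x) = half2 x := by abel
    rw [this, concat_halves]
  right_inv p := by
    have h1 := half1_concat p.1 (p.1 + Matrix.vecMul p.2 (Rmat (2 ^ t)))
    have h2 := half2_concat p.1 (p.1 + Matrix.vecMul p.2 (Rmat (2 ^ t)))
    refine Prod.ext h1 ?_
    show (2 : ℝ)⁻¹ • Matrix.vecMul (half2 _ - half1 _) (Rmat (2 ^ t)) = _
    rw [h1, h2, add_sub_cancel_left, smul_vecMul_cancel ht]
  map_add' x y := by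
    refine Prod.ext rfl ?_
    show (2 : ℝ)⁻¹ • Matrix.vecMul (half2 (x + y) - half1 (x + y)) (Rmat (2 ^ t)) = _
    rw [half1_add, half2_add, show half2 x + half2 y - (half1 x + half1 y)
        = (half2 x - half1 x) + (half2 y - half1 y) by abel, Matrix.add_vecMul, smul_add]
    rfl

lemma Phi_fst {t : ℕ} (ht : 2 ^ t % 2 = 0) (x : Fin (2 ^ (t + 1)) → ℝ) :
    (Phi t ht x).1 = half1 x := rfl

lemma Phi_snd {t : ℕ} (ht : 2 ^ t % 2 = 0) (x : Fin (2 ^ (t + 1)) → ℝ) :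
    (Phi t ht x).2 = (2 : ℝ)⁻¹ • Matrix.vecMul (half2 x - half1 x) (Rmat (2 ^ t)) := rfl

lemma mem_BW_succ {t : ℕ} (x : Fin (2 ^ (t + 1)) → ℝ) :
    x ∈ BW (t + 1) ↔ half1 x ∈ BW t ∧ half2 x - half1 x ∈ RBW t := by
  constructor
  · rintro ⟨u, v, hu, ⟨w, hw, rfl⟩, rfl⟩
    rw [half1_concat, half2_concat]
    exact ⟨hu, w, hw, by rw [add_sub_cancel_left]⟩
  · rintro ⟨h1, w, hw, hv⟩
    exact ⟨half1 x, half2 x - half1 x, h1, ⟨w, hw, hv.symm⟩,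
      by rw [add_sub_cancel, concat_halves]⟩

lemma mem_BW_iff_Phi {t : ℕ} (ht : 2 ^ t % 2 = 0) (x : Fin (2 ^ (t + 1)) → ℝ) :
    x ∈ BW (t + 1) ↔ (Phi t ht x).1 ∈ BW t ∧ (Phi t ht x).2 ∈ BW t := by
  rw [mem_BW_succ, Phi_fst, Phi_snd]
  refine and_congr_right fun _ => ?_
  set v := half2 x - half1 x
  constructor
  · rintro ⟨w, hw, hv⟩
    have heq : (2 : ℝ)⁻¹ • Matrix.vecMul v (Rmat (2 ^ t)) = w := by
      rw [← hv, smul_vecMul_cancel ht]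
    rw [heq]; exact hw
  · intro hmem
    refine ⟨(2 : ℝ)⁻¹ • Matrix.vecMul v (Rmat (2 ^ t)), hmem, ?_⟩
    show ((2 : ℝ)⁻¹ • Matrix.vecMul v (Rmat (2 ^ t))) ᵥ* Rmat (2 ^ t) = v
    rw [Matrix.smul_vecMul, smul_vecMul_cancel ht]

lemma mem_RBW_iff_Phi {t : ℕ} (ht : 2 ^ t % 2 = 0) (x : Fin (2 ^ (t + 1)) → ℝ) :
    x ∈ RBW (t + 1) ↔ (Phi t ht x).1 ∈ RBW t ∧ (Phi t ht x).2 ∈ RBW t := by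
  constructor
  · rintro ⟨y, hy, rfl⟩
    rw [mem_BW_succ] at hy
    obtain ⟨hy1, hy2⟩ := hy
    simp only [Phi_fst, Phi_snd]
    constructor
    · rw [half1_vecMul ht]
      exact ⟨half1 y, hy1, rfl⟩
    · rw [half1_vecMul ht, half2_vecMul ht, ← Matrix.sub_vecMul, smul_vecMul_cancel ht]
      exact hy2
  · simp only [Phi_fst, Phi_snd]
    rintro ⟨⟨u, hu, hu'⟩, ⟨w, hw, hw'⟩⟩
    simp only at hu' hw'
    set v := half2 x - half1 x with hv
    -- from hw' : w ᵥ* R = 2⁻¹ • (v ᵥ* R), deduce v = 2 • w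
    have hveq : v = (2 : ℝ) • w := by
      have h1 : (2 : ℝ)⁻¹ • Matrix.vecMul (Matrix.vecMul w (Rmat (2 ^ t))) (Rmat (2 ^ t))
          = (2 : ℝ)⁻¹ • Matrix.vecMul ((2 : ℝ)⁻¹ • Matrix.vecMul v (Rmat (2 ^ t)))
              (Rmat (2 ^ t)) := by rw [hw']
      rw [smul_vecMul_cancel ht, Matrix.smul_vecMul, smul_comm, smul_vecMul_cancel ht] at h1
      rw [h1, smul_smul, mul_inv_cancel₀ two_ne_zero, one_smul]
    refine ⟨concat u (u + Matrix.vecMul w (Rmat (2 ^ t))), ⟨u, Matrix.vecMul w (Rmat (2 ^ t)),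
      hu, ⟨w, hw, rfl⟩, rfl⟩, ?_⟩
    show Matrix.vecMul (concat u (u + Matrix.vecMul w (Rmat (2 ^ t)))) (Rmat (2 ^ (t + 1))) = x
    have key : ∀ z : Fin (2 ^ (t + 1)) → ℝ,
        half1 z = half1 x → half2 z = half2 x → z = x := by
      intro z e1 e2
      rw [← concat_halves z, e1, e2, concat_halves]
    apply key
    · rw [half1_vecMul ht, half1_concat, hu']
    · rw [half2_vecMul ht, half2_concat, Matrix.add_vecMul, hu', vecMul_vecMul_Rmat ht,
        ← hveq]
      have : half2 x = half1 x + v := by rw [hv]; abel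
      rw [← this]


lemma vecMul_R2 (w : Fin 2 → ℝ) :
    Matrix.vecMul w (Rmat 2) = ![w 0 + w 1, w 0 - w 1] := by
  funext j
  match j with
  | ⟨0, h⟩ =>
    have := vecMul_Rmat_even (n := 2) w (m := 0) (by omega)
    simpa using this
  | ⟨1, h⟩ =>
    have := vecMul_Rmat_odd (n := 2) w (m := 0) (by omega)
    simpa using this

/-- The integer lattice as an additive subgroup of `ℝⁿ`. -/
def intLat (n : ℕ) : AddSubgroup (Fin n → ℝ) where
  carrier := {x | ∀ i, ∃ z : ℤ, x i = (z : ℝ)}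
  add_mem' := by
    rintro x y hx hy i
    obtain ⟨a, ha⟩ := hx i
    obtain ⟨b, hb⟩ := hy i
    exact ⟨a + b, by push_cast [Pi.add_apply, ha, hb]; ring⟩
  zero_mem' := fun i => ⟨0, by simp⟩
  neg_mem' := by
    rintro x hx i
    obtain ⟨a, ha⟩ := hx i
    exact ⟨-a, by push_cast [Pi.neg_apply, ha]; ring⟩

lemma BW_one : BW 1 = (intLat 2 : Set (Fin 2 → ℝ)) := by
  have hR1 : ∀ w : Fin (2 ^ 0) → ℝ, Matrix.vecMul w (Rmat (2 ^ 0)) = w := by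
    intro w
    have h1 : Rmat (2 ^ 0) = 1 := by
      funext i j
      fin_cases i <;> fin_cases j <;> simp [Rmat, Matrix.one_apply]
    rw [h1, Matrix.vecMul_one]
  ext x
  constructor
  · rintro ⟨u, v, hu, ⟨w, hw, rfl⟩, rfl⟩
    intro i
    rw [hR1 w]
    obtain ⟨a, ha⟩ := hu 0
    obtain ⟨b, hb⟩ := hw 0
    match i with
    | ⟨0, h⟩ =>
      refine ⟨a, ?_⟩
      show (if h : (0 : ℕ) < 2 ^ 0 then u ⟨0, h⟩ else _) = _
      rw [dif_pos (by norm_num)]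
      convert ha using 2
      exact Fin.ext rfl
    | ⟨1, h⟩ =>
      refine ⟨a + b, ?_⟩
      show (if h : (1 : ℕ) < 2 ^ 0 then _ else (u + w) ⟨1 - 2 ^ 0, _⟩) = _
      rw [dif_neg (by norm_num)]
      push_cast
      show u _ + w _ = _
      rw [ha, hb]
  · intro hx
    obtain ⟨a, ha⟩ := hx 0
    obtain ⟨b, hb⟩ := hx 1
    refine ⟨fun _ => x 0, fun _ => x 1 - x 0, fun _ => ⟨a, ha⟩, ?_, ?_⟩
    · exact ⟨fun _ => x 1 - x 0, fun _ => ⟨b - a, by push_cast [ha, hb]; ring⟩,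
        (hR1 _).symm⟩
    · funext j
      match j with
      | ⟨0, h⟩ =>
        show x _ = (if h : (0 : ℕ) < 2 ^ 0 then _ else _)
        rw [dif_pos (by norm_num)]
        exact congrArg x (Fin.ext rfl)
      | ⟨1, h⟩ =>
        show x _ = (if h : (1 : ℕ) < 2 ^ 0 then _ else _)
        rw [dif_neg (by norm_num)]
        show x 1 = x 0 + (x 1 - x 0)
        ring

def BW1grp : AddSubgroup (Fin 2 → ℝ) := intLat 2

def RBW1grp : AddSubgroup (Fin 2 → ℝ) :=
  AddSubgroup.map ((Rmat 2).vecMulLinear.toAddMonoidHom) (intLat 2)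

lemma RBW1_carrier : (RBW1grp : Set (Fin 2 → ℝ)) = RBW 1 := by
  show _ '' _ = _
  rw [RBW, ← BW_one]
  ext y
  constructor
  · rintro ⟨w, hw, rfl⟩
    exact ⟨w, hw, rfl⟩
  · rintro ⟨w, hw, rfl⟩
    exact ⟨w, hw, rfl⟩

lemma RBW1_le : RBW1grp ≤ BW1grp := by
  rintro x ⟨w, hw, rfl⟩
  intro i
  show ∃ z : ℤ, Matrix.vecMul w (Rmat 2) i = z
  rw [vecMul_R2]
  obtain ⟨a, ha⟩ := hw 0
  obtain ⟨b, hb⟩ := hw 1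
  fin_cases i
  · exact ⟨a + b, by push_cast [ha, hb]; simp⟩
  · exact ⟨a - b, by push_cast [ha, hb]; simp⟩

/-- Sum-of-entries mod 2 on the integer lattice. -/
def fmod2 : ↥BW1grp →+ ZMod 2 :=
  AddMonoidHom.mk' (fun x => ((round (x.1 0) + round (x.1 1) : ℤ) : ZMod 2)) (by
    rintro ⟨x, hx⟩ ⟨y, hy⟩
    obtain ⟨a, ha⟩ := hx 0
    obtain ⟨b, hb⟩ := hx 1
    obtain ⟨c, hc⟩ := hy 0
    obtain ⟨d, hd⟩ := hy 1
    show ((round ((x + y) 0) + round ((x + y) 1) : ℤ) : ZMod 2)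
        = ((round (x 0) + round (x 1) : ℤ) : ZMod 2)
          + ((round (y 0) + round (y 1) : ℤ) : ZMod 2)
    rw [Pi.add_apply, Pi.add_apply, ha, hb, hc, hd, ← Int.cast_add, ← Int.cast_add,
      round_intCast, round_intCast, round_intCast, round_intCast, round_intCast,
      round_intCast]
    push_cast
    ring)

lemma fmod2_ker : fmod2.ker = RBW1grp.addSubgroupOf BW1grp := by
  ext ⟨x, hx⟩
  obtain ⟨a, ha⟩ := hx 0
  obtain ⟨b, hb⟩ := hx 1
  constructor
  · intro h
    have h' : ((a + b : ℤ) : ZMod 2) = 0 := by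
      have : fmod2 ⟨x, hx⟩ = ((round (x 0) + round (x 1) : ℤ) : ZMod 2) := rfl
      rw [AddMonoidHom.mem_ker, this, ha, hb, round_intCast, round_intCast] at h
      exact h
    have hdvd : (2 : ℤ) ∣ a + b := by
      rwa [ZMod.intCast_zmod_eq_zero_iff_dvd] at h'
    obtain ⟨c, hc⟩ := hdvd
    show x ∈ RBW1grp
    refine ⟨![(c : ℝ), (a - c : ℝ)], fun i => by
      fin_cases i
      · exact ⟨c, by simp⟩
      · exact ⟨a - c, by push_cast; simp⟩, ?_⟩
    show Matrix.vecMul _ (Rmat 2) = x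
    rw [vecMul_R2]
    funext i
    fin_cases i
    · show (c : ℝ) + (a - c : ℝ) = x 0
      rw [ha]; push_cast; ring
    · show (c : ℝ) - (a - c : ℝ) = x 1
      rw [hb]
      have : (b : ℝ) = 2 * c - a := by
        have : (a : ℝ) + b = 2 * c := by exact_mod_cast congrArg (fun z : ℤ => (z : ℝ)) hc
        linarith
      rw [this]; push_cast; ring
  · rintro ⟨w, hw, hwx⟩
    have hwx' : Matrix.vecMul w (Rmat 2) = x := hwx
    obtain ⟨p, hp⟩ := hw 0
    obtain ⟨q, hq⟩ := hw 1
    rw [AddMonoidHom.mem_ker]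
    show ((round (x 0) + round (x 1) : ℤ) : ZMod 2) = 0
    have hx0 : x 0 = (p + q : ℤ) := by
      rw [← hwx']
      rw [vecMul_R2]; show w 0 + w 1 = _; rw [hp, hq]; push_cast; ring
    have hx1 : x 1 = (p - q : ℤ) := by
      rw [← hwx']
      rw [vecMul_R2]; show w 0 - w 1 = _; rw [hp, hq]; push_cast; ring
    rw [hx0, hx1, round_intCast, round_intCast,
      show p + q + (p - q) = 2 * p from by ring, ZMod.intCast_zmod_eq_zero_iff_dvd]
    exact ⟨p, rfl⟩

lemma fmod2_surj : Function.Surjective fmod2 := by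
  intro c
  have : ∀ c : ZMod 2, c = 0 ∨ c = 1 := by decide
  rcases this c with rfl | rfl
  · exact ⟨0, map_zero _⟩
  · refine ⟨⟨![1, 0], fun i => by
      fin_cases i
      · exact ⟨1, by simp⟩
      · exact ⟨0, by simp⟩⟩, ?_⟩
    show ((round ((1 : ℝ)) + round ((0 : ℝ)) : ℤ) : ZMod 2) = 1
    rw [round_one, round_zero, add_zero, Int.cast_one]

lemma base_index : (RBW1grp.addSubgroupOf BW1grp).index = 2 := by
  rw [← fmod2_ker, AddSubgroup.index_ker]
  have hr : fmod2.range = ⊤ := by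
    rw [AddMonoidHom.range_eq_top]
    exact fmod2_surj
  rw [hr]
  rw [Nat.card_congr AddSubgroup.topEquiv.toEquiv, Nat.card_zmod]


-- relindex of a product
lemma relindex_prod_self {A : Type*} [AddCommGroup A] (G H : AddSubgroup A) :
    ((H.prod H).addSubgroupOf (G.prod G)).index
      = (H.addSubgroupOf G).index * (H.addSubgroupOf G).index := by
  classical
  have hι : ∀ (ι : (↥G × ↥G) →+ (A × A)),
      ι = (G.subtype.prodMap G.subtype) → True := fun _ _ => trivial
  set ι : (↥G × ↥G) →+ (A × A) := G.subtype.prodMap G.subtype with hdef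
  have hrange : ι.range = G.prod G := by
    ext p
    constructor
    · rintro ⟨⟨a, b⟩, rfl⟩
      exact ⟨a.2, b.2⟩
    · rintro ⟨h1, h2⟩
      exact ⟨(⟨p.1, h1⟩, ⟨p.2, h2⟩), rfl⟩
  have hcomap : (H.prod H).comap ι
      = (H.addSubgroupOf G).prod (H.addSubgroupOf G) := by
    ext ⟨a, b⟩
    rfl
  have h1 : ((H.prod H).comap ι).index = (H.prod H).relIndex ι.range :=
    AddSubgroup.index_comap (H.prod H) ι
  rw [hrange, hcomap, AddSubgroup.index_prod] at h1
  exact h1.symm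


/-- `RBW_n` is a finite-index subgroup of `BW_n`, and the quotient
group `BW_n / RBW_n` has order `2^{n/2}`. -/
theorem bw_quotient_order :
    ∀ t : ℕ, 1 ≤ t →
      ∃ G H : AddSubgroup (Fin (2 ^ t) → ℝ),
        (G : Set (Fin (2 ^ t) → ℝ)) = BW t ∧
        (H : Set (Fin (2 ^ t) → ℝ)) = RBW t ∧
        H ≤ G ∧
        (H.addSubgroupOf G).index = 2 ^ (2 ^ t / 2) := by
  intro t ht
  induction t, ht using Nat.le_induction with
  | base =>
    exact ⟨BW1grp, RBW1grp, BW_one.symm, RBW1_carrier, RBW1_le, by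
      rw [base_index]; norm_num⟩
  | succ t ht IH =>
    obtain ⟨G, H, hG, hH, hHG, hidx⟩ := IH
    have hev : 2 ^ t % 2 = 0 := by
      have : 2 ∣ 2 ^ t := dvd_pow_self 2 (by omega)
      omega
    set φ := (Phi t hev).toAddMonoidHom with hφ
    have hφc : ∀ x, φ x = Phi t hev x := fun _ => rfl
    refine ⟨(G.prod G).comap φ, (H.prod H).comap φ, ?_, ?_, ?_, ?_⟩
    · ext x
      show x ∈ (G.prod G).comap φ ↔ _
      rw [AddSubgroup.mem_comap, mem_BW_iff_Phi hev x]
      constructor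
      · rintro ⟨h1, h2⟩
        exact ⟨by rw [← hG]; exact h1, by rw [← hG]; exact h2⟩
      · rintro ⟨h1, h2⟩
        rw [← hG] at h1 h2
        exact ⟨h1, h2⟩
    · ext x
      show x ∈ (H.prod H).comap φ ↔ _
      rw [AddSubgroup.mem_comap, mem_RBW_iff_Phi hev x]
      constructor
      · rintro ⟨h1, h2⟩
        exact ⟨by rw [← hH]; exact h1, by rw [← hH]; exact h2⟩
      · rintro ⟨h1, h2⟩
        rw [← hH] at h1 h2
        exact ⟨h1, h2⟩
    · exact AddSubgroup.comap_mono (AddSubgroup.prod_mono hHG hHG)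
    · have hsurj : Function.Surjective φ := (Phi t hev).surjective
      have e1 : (((H.prod H).comap φ).addSubgroupOf ((G.prod G).comap φ)).index
          = ((H.prod H).comap φ).relIndex ((G.prod G).comap φ) := rfl
      rw [e1, AddSubgroup.relIndex_comap,
        AddSubgroup.map_comap_eq_self_of_surjective hsurj]
      have e2 : (H.prod H).relIndex (G.prod G)
          = ((H.prod H).addSubgroupOf (G.prod G)).index := rfl
      rw [e2, relindex_prod_self, hidx]
      rw [← pow_add]
      congr 1
      have h1 : 2 ∣ 2 ^ t := dvd_pow_self 2 (by omega)
      have h2 : (2 : ℕ) ^ (t + 1) = 2 ^ t + 2 ^ t := by rw [pow_succ]; ring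
      omega


end
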